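/- A price p supporting the primal solution exists (i.e., x_i* maximizes pᵀg_i − C_i(x_i) over X_i for every i) if and only if the duality gap ν − ν^D is zero; moreover, in that case the set of supporting prices equals the set of maximizers of the dual problem. -/
import Mathlib


/-- A price `p` supports the primal solution `x*` if every `x*_i` maximizes
`pᵀ g_i − C_i x_i` over `X_i`. -/
def SupportsPrice {T : ℕ} {I : Type*}
    (X : I → Set ((Fin T → ℝ) × (Fin T → ℝ)))
    (C : I → ((Fin T → ℝ) × (Fin T → ℝ)) → ℝ)
    (xstar : I → (Fin T → ℝ) × (Fin T → ℝ)) (p : Fin T → ℝ) : Prop :=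
  ∀ i, ∀ x ∈ X i,
    (∑ t, p t * x.2 t) - C i x ≤ (∑ t, p t * (xstar i).2 t) - C i (xstar i)

/-- A supporting price exists iff the duality gap `ν − ν^D` is zero; moreover, in that
case the set of supporting prices equals the set of maximizers of the dual problem. -/
theorem stmt5 {T : ℕ} {I : Type*} [Fintype I]
    (X : I → Set ((Fin T → ℝ) × (Fin T → ℝ)))
    (C : I → ((Fin T → ℝ) × (Fin T → ℝ)) → ℝ)
    (d : Fin T → ℝ)
    (π : I → (Fin T → ℝ) → ℝ)
    (hπ : ∀ i p, IsGreatest {v | ∃ x ∈ X i, v = (∑ t, p t * x.2 t) - C i x} (π i p))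
    (xstar : I → (Fin T → ℝ) × (Fin T → ℝ))
    (hxstarX : ∀ i, xstar i ∈ X i)
    (hbal : (∑ i, (xstar i).2) = d)
    (ν νD : ℝ)
    (hν : IsLeast {v | ∃ x : I → (Fin T → ℝ) × (Fin T → ℝ),
        (∀ i, x i ∈ X i) ∧ (∑ i, (x i).2) = d ∧ v = ∑ i, C i (x i)} ν)
    (hνopt : ν = ∑ i, C i (xstar i))
    (hνD : IsGreatest {v | ∃ p : Fin T → ℝ,
        v = (∑ t, p t * d t) - ∑ i, π i p} νD) :
    ((∃ p, SupportsPrice X C xstar p) ↔ ν - νD = 0) ∧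
    (ν - νD = 0 →
      {p | SupportsPrice X C xstar p}
        = {p | (∑ t, p t * d t) - ∑ i, π i p = νD}) := by
  have main : ∀ p : Fin T → ℝ,
      ((∑ t, p t * d t) - ∑ i, π i p ≤ ν) ∧
      (SupportsPrice X C xstar p ↔ (∑ t, p t * d t) - ∑ i, π i p = ν) := by
    intro p
    set f : I → ℝ := fun i => (∑ t, p t * (xstar i).2 t) - C i (xstar i) with hf
    have hfle : ∀ i, f i ≤ π i p := fun i => (hπ i p).2 ⟨xstar i, hxstarX i, rfl⟩
    have hsumd : (∑ t, p t * d t) = ∑ i, ∑ t, p t * (xstar i).2 t := by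
      rw [← hbal]
      simp only [Finset.sum_apply, Finset.mul_sum]
      exact Finset.sum_comm
    have halg : (∑ t, p t * d t) - ∑ i, π i p = ν - ∑ i, (π i p - f i) := by
      rw [hsumd, hνopt, hf]
      rw [Finset.sum_sub_distrib, Finset.sum_sub_distrib]
      ring
    have hnonneg : ∀ i ∈ Finset.univ, 0 ≤ π i p - f i :=
      fun i _ => sub_nonneg.mpr (hfle i)
    have hsupp : SupportsPrice X C xstar p ↔ ∀ i, π i p = f i := by
      constructor
      · intro hs i
        obtain ⟨x, hx, hv⟩ := (hπ i p).1
        exact le_antisymm (hv ▸ hs i x hx) (hfle i)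
      · intro h i x hx
        exact le_trans ((hπ i p).2 ⟨x, hx, rfl⟩) (le_of_eq (h i))
    constructor
    · rw [halg]
      have : (0:ℝ) ≤ ∑ i, (π i p - f i) := Finset.sum_nonneg hnonneg
      linarith
    · rw [halg, hsupp]
      constructor
      · intro h
        have : ∑ i, (π i p - f i) = 0 := by
          rw [Finset.sum_eq_zero]
          intro i _; rw [h i]; ring
        rw [this]; ring
      · intro h
        have h0 : ∑ i, (π i p - f i) = 0 := by linarith
        intro i
        have := (Finset.sum_eq_zero_iff_of_nonneg hnonneg).mp h0 i (Finset.mem_univ i)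
        linarith
  have hle : νD ≤ ν := by
    obtain ⟨p0, hp0⟩ := hνD.1
    exact hp0 ▸ (main p0).1
  constructor
  · constructor
    · rintro ⟨p, hp⟩
      have hν_mem : ν ∈ {v | ∃ p : Fin T → ℝ, v = (∑ t, p t * d t) - ∑ i, π i p} :=
        ⟨p, ((main p).2.mp hp).symm⟩
      have := hνD.2 hν_mem
      linarith
    · intro hgap
      obtain ⟨p, hp⟩ := hνD.1
      refine ⟨p, (main p).2.mpr ?_⟩
      linarith [hp.symm]
  · intro hgap
    ext p
    simp only [Set.mem_setOf_eq, (main p).2]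
    constructor <;> intro h <;> linarith
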